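/- Assume K is algebraically closed. Choose a compatible system (ζ_n)_{n≥0} in O with ζ_0 = 1, ζ_1 ≠ 1, ζ_{n+1}^p = ζ_n, and ζ_n a primitive p^n-th root of unity, and let ε, ε' ∈ E⁺ be the elements whose n-th components are ζ_n mod p and ζ_{n+1} mod p respectively (so (ε')^p = ε). Then the kernel of Fontaine's homomorphism θ : W(E⁺) → O is the principal ideal generated by ([ε] − 1)/([ε'] − 1) = Σ_{i=0}^{p-1} [ε']^i. -/

import Mathlib

open scoped NNReal

/-- The old Mathlib `ModPOld K v O hv p`: `O/(p)` for `O`, ring of integers of `K`. -/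
def ModPOld (K : Type*) [Field K] (v : Valuation K ℝ≥0) (O : Type*) [CommRing O] [Algebra O K]
    (_hv : v.Integers O) (p : ℕ) :=
  O ⧸ (Ideal.span {(p : O)} : Ideal O)

instance ModPOld.commRing (K : Type*) [Field K] (v : Valuation K ℝ≥0) (O : Type*) [CommRing O]
    [Algebra O K] (hv : v.Integers O) (p : ℕ) : CommRing (ModPOld K v O hv p) :=
  Ideal.Quotient.commRing (Ideal.span {(p : O)} : Ideal O)

instance ModPOld.charP (K : Type*) [Field K] (v : Valuation K ℝ≥0) (O : Type*) [CommRing O]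
    [Algebra O K] (hv : v.Integers O) (p : ℕ) [Fact p.Prime] [hvp : Fact (v p ≠ 1)] :
    CharP (ModPOld K v O hv p) p :=
  CharP.quotient O p <| mt hv.one_of_isUnit <| (map_natCast (algebraMap O K) p).symm ▸ hvp.1

/-- The old Mathlib `PreTiltOld K v O hv p`: perfection of `O/(p)`. -/
def PreTiltOld (K : Type*) [Field K] (v : Valuation K ℝ≥0) (O : Type*) [CommRing O] [Algebra O K]
    (hv : v.Integers O) (p : ℕ) :=
  Perfection (ModPOld K v O hv p) p

instance PreTiltOld.commRing (K : Type*) [Field K] (v : Valuation K ℝ≥0) (O : Type*) [CommRing O]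
    [Algebra O K] (hv : v.Integers O) (p : ℕ) [Fact p.Prime] [Fact (v p ≠ 1)] :
    CommRing (PreTiltOld K v O hv p) :=
  inferInstanceAs <| CommRing <| Perfection _ _

namespace FontaineThetaAux

open WittVector

set_option linter.unusedSectionVars false

variable {p : ℕ} [hp : Fact p.Prime] {R : Type*} [CommRing R] [CharP R p]

lemma iterate_verschiebung_coeff_eq_zero (y : WittVector p R) :
    ∀ {k i : ℕ}, i < k → (verschiebung^[k] y).coeff i = 0 := by
  intro k
  induction k with
  | zero => omega
  | succ k ih =>
      intro i hi
      rw [Function.iterate_succ_apply']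
      match i with
      | 0 => rw [verschiebung_coeff_zero]
      | (j+1) => rw [verschiebung_coeff_succ]; exact ih (by omega)

lemma p_pow_mul_eq (k : ℕ) (x : WittVector p R) :
    (p : WittVector p R) ^ k * x = verschiebung^[k] (frobenius^[k] x) := by
  induction k with
  | zero => simp
  | succ k ih =>
      calc (p : WittVector p R) ^ (k+1) * x
          = ((p : WittVector p R) ^ k * x) * p := by ring
        _ = verschiebung (frobenius ((p : WittVector p R) ^ k * x)) := by
            rw [verschiebung_frobenius]
        _ = verschiebung (frobenius (verschiebung^[k] (frobenius^[k] x))) := by rw [ih]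
        _ = verschiebung^[k+1] (frobenius^[k+1] x) := by
            have hw := ((verschiebung_frobenius_comm (p := p) (R := R)).iterate_left k)
              ((frobenius^[k]) x)
            rw [Function.iterate_succ_apply' verschiebung, Function.iterate_succ_apply' frobenius,
              hw]

lemma coeff_p_pow_mul_eq_zero (k : ℕ) (x : WittVector p R) {i : ℕ} (hi : i < k) :
    ((p : WittVector p R) ^ k * x).coeff i = 0 := by
  rw [p_pow_mul_eq]
  exact iterate_verschiebung_coeff_eq_zero _ hi

lemma exists_p_pow_mul [PerfectRing R p] (x : WittVector p R) (k : ℕ)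
    (h : ∀ i < k, x.coeff i = 0) : ∃ y, x = (p : WittVector p R) ^ k * y := by
  obtain ⟨y, hy⟩ := (frobenius_bijective p R).surjective.iterate k (x.shift k)
  refine ⟨y, ?_⟩
  rw [p_pow_mul_eq, hy, ← eq_iterate_verschiebung h]

lemma exists_teichmuller_add_p_mul [PerfectRing R p] (x : WittVector p R) :
    ∃ y, x = teichmuller p (x.coeff 0) + p * y := by
  have hc : ∀ i < 1, (x - teichmuller p (x.coeff 0)).coeff i = 0 := by
    intro i hi
    interval_cases i
    have h2 : (x - teichmuller p (x.coeff 0)).coeff 0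
        = constantCoeff x - constantCoeff (teichmuller p (x.coeff 0)) := by
      rw [← map_sub]; rfl
    rw [h2, constantCoeff_apply, constantCoeff_apply, teichmuller_coeff_zero, sub_self]
  obtain ⟨y, hy⟩ := exists_p_pow_mul (x - teichmuller p (x.coeff 0)) 1 hc
  refine ⟨y, ?_⟩
  rw [pow_one] at hy
  linear_combination hy

lemma truncate_eq_of_dvd {x y : WittVector p R} {k : ℕ}
    (h : (p : WittVector p R) ^ k ∣ x - y) : truncate k x = truncate k y := by
  obtain ⟨z, hz⟩ := h
  rw [← sub_eq_zero, ← map_sub, hz]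
  ext i
  rw [coeff_truncate, coeff_p_pow_mul_eq_zero _ _ i.2]
  simp

lemma coeff_eq_of_dvd {x y : WittVector p R} {k i : ℕ} (hi : i < k)
    (h : (p : WittVector p R) ^ k ∣ x - y) : x.coeff i = y.coeff i := by
  have := truncate_eq_of_dvd h
  have h2 := congr_arg (fun t : TruncatedWittVector p k R => t.coeff ⟨i, hi⟩) this
  simpa only [coeff_truncate] using h2

lemma eq_zero_of_forall_truncate {x : WittVector p R}
    (h : ∀ k, truncate k x = 0) : x = 0 := by
  ext n
  have h2 := congr_arg (fun t : TruncatedWittVector p (n+1) R => t.coeff ⟨n, n.lt_succ_self⟩)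
    (h (n+1))
  simp only [coeff_truncate, map_zero] at h2 ⊢
  simpa using h2

/-- The binomial identity `(1+x)^p = 1 + x^p + p*x + p*x^2*g`. -/
lemma one_add_pow_prime {S : Type*} [CommRing S] (hps : p.Prime) (x : S) :
    ∃ g, (1 + x) ^ p = 1 + x ^ p + p * x + p * x ^ 2 * g := by
  have h := add_pow_prime_eq hps (1 : S) x
  have hmem : (p - 1) ∈ Finset.Ioo 0 p := by
    rw [Finset.mem_Ioo]
    have := hps.two_le
    omega
  rw [← Finset.insert_erase hmem, Finset.sum_insert (Finset.notMem_erase _ _)] at h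
  have hc : (p.choose (p - 1) / p : ℕ) = 1 := by
    have h1 : p.choose (p - 1) = p := by
      have := Nat.choose_symm (n := p) (k := 1) hps.one_lt.le
      simpa [Nat.choose_one_right] using this
    rw [h1, Nat.div_self hps.pos]
  have hdvd : x ∣ ∑ k ∈ (Finset.Ioo 0 p).erase (p - 1),
      (1 : S) ^ (k - 1) * x ^ (p - k - 1) * ((p.choose k / p : ℕ) : S) := by
    refine Finset.dvd_sum fun k hk => ?_
    have hk2 : 1 ≤ p - k - 1 := by
      rw [Finset.mem_erase, Finset.mem_Ioo] at hk
      omega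
    exact ((dvd_pow_self x (by omega)).mul_left _).mul_right _
  obtain ⟨g, hg⟩ := hdvd
  refine ⟨g, ?_⟩
  rw [hg] at h
  have h1 : p - 1 + 1 = p := by have := hps.pos; omega
  rw [hc] at h
  have hxp : (1:S) ^ (p-1-1) * x ^ (p - (p-1) - 1) * ((1:ℕ):S) = 1 := by
    have : p - (p - 1) - 1 = 0 := by have := hps.pos; omega
    simp [this]
  rw [hxp] at h
  rw [h]; ring

lemma pow_inj_nnreal {a b : ℝ≥0} {n : ℕ} (hn : n ≠ 0) (h : a ^ n = b ^ n) : a = b := by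
  rcases lt_trichotomy a b with hab | hab | hab
  · exact absurd h (ne_of_lt (pow_lt_pow_left₀ hab zero_le hn))
  · exact hab
  · exact absurd h.symm (ne_of_lt (pow_lt_pow_left₀ hab zero_le hn))

end FontaineThetaAux
namespace FontaineThetaAux

section Roots

variable {p : ℕ} {K : Type*} [Field K] {v : Valuation K ℝ≥0}
variable {O : Type*} [CommRing O] [Algebra O K]

/-- If `z1 ≠ 1` is a `p`-th root of unity then `v(z1 - 1)^(p-1) = v p`. -/
lemma root_one_val (hp : p.Prime) (hv : v.Integers O) (hvp1 : v (p : K) < 1)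
    {z1 : O} (h1 : z1 ^ p = 1) (hne : z1 ≠ 1) :
    v (algebraMap O K (z1 - 1)) ^ (p - 1) = v (p : K) := by
  haveI : Fact p.Prime := ⟨hp⟩
  obtain ⟨g, hg⟩ := one_add_pow_prime hp (z1 - 1)
  rw [show (1 : O) + (z1 - 1) = z1 by ring] at hg
  have e : (z1 - 1) ^ p = -((p : O) * ((z1 - 1) * (1 + (z1 - 1) * g))) := by
    linear_combination h1 - hg
  have hx0 : algebraMap O K (z1 - 1) ≠ 0 := by
    intro h0
    exact hne (sub_eq_zero.1 (hv.hom_inj (by rw [h0, map_zero])))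
  have hv0 : v (algebraMap O K (z1 - 1)) ≠ 0 := fun h => hx0 (v.zero_iff.1 h)
  have ve : v (algebraMap O K (z1 - 1)) ^ p
      = v (p : K) * (v (algebraMap O K (z1 - 1)) * v (algebraMap O K (1 + (z1 - 1) * g))) := by
    have := congr_arg (fun t : O => v (algebraMap O K t)) e
    simpa only [map_pow, map_mul, map_neg, map_natCast, Valuation.map_neg, Valuation.map_mul,
      Valuation.map_pow] using this
  have hxle : v (algebraMap O K (z1 - 1)) ≤ 1 := hv.map_le_one _
  have hgle : v (algebraMap O K (1 + (z1 - 1) * g)) ≤ 1 := hv.map_le_one _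
  have hxlt : v (algebraMap O K (z1 - 1)) < 1 := by
    rcases lt_or_eq_of_le hxle with h | h
    · exact h
    · exfalso
      rw [h, one_pow, one_mul] at ve
      have : v (p : K) * v (algebraMap O K (1 + (z1 - 1) * g)) ≤ v (p : K) * 1 :=
        mul_le_mul_right hgle _
      rw [mul_one] at this
      exact absurd (ve.le.trans this) (not_le.2 hvp1)
  have hone : v (algebraMap O K (1 + (z1 - 1) * g)) = 1 := by
    rw [map_add, map_one, map_mul]
    refine v.map_one_add_of_lt ?_
    calc v (algebraMap O K (z1 - 1) * algebraMap O K g)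
        = v (algebraMap O K (z1 - 1)) * v (algebraMap O K g) := v.map_mul _ _
      _ ≤ v (algebraMap O K (z1 - 1)) * 1 := mul_le_mul_right (hv.map_le_one _) _
      _ = v (algebraMap O K (z1 - 1)) := mul_one _
      _ < 1 := hxlt
  rw [hone, mul_one] at ve
  have hps : p - 1 + 1 = p := Nat.succ_pred_eq_of_pos hp.pos
  apply mul_right_cancel₀ hv0
  rw [← pow_succ, hps, ve]

/-- If `z2` is a `p`-th root of `z1` (a nontrivial `p`-th root of 1), then
`v(z2-1)^(p*(p-1)) = v p`. -/
lemma root_two_val (hp : p.Prime) (hv : v.Integers O) (hvp1 : v (p : K) < 1)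
    (hvp0 : v (p : K) ≠ 0)
    {z1 z2 : O} (h1 : z1 ^ p = 1) (hne : z1 ≠ 1) (h2 : z2 ^ p = z1) :
    v (algebraMap O K (z2 - 1)) ^ (p * (p - 1)) = v (p : K) := by
  haveI : Fact p.Prime := ⟨hp⟩
  have hS1 := root_one_val hp hv hvp1 h1 hne
  obtain ⟨g, hg⟩ := one_add_pow_prime hp (z2 - 1)
  rw [show (1 : O) + (z2 - 1) = z2 by ring] at hg
  have e : (z2 - 1) ^ p + (p : O) * ((z2 - 1) * (1 + (z2 - 1) * g)) = z1 - 1 := by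
    linear_combination h2 - hg
  have hne2 : z2 ≠ 1 := by
    intro h; apply hne; rw [← h2, h, one_pow]
  have hx0 : algebraMap O K (z2 - 1) ≠ 0 := by
    intro h0
    exact hne2 (sub_eq_zero.1 (hv.hom_inj (by rw [h0, map_zero])))
  have hv02 : v (algebraMap O K (z2 - 1)) ≠ 0 := fun h => hx0 (v.zero_iff.1 h)
  have hv01 : v (algebraMap O K (z1 - 1)) ≠ 0 := by
    intro h
    rw [h, zero_pow (by have := hp.two_le; omega)] at hS1
    exact hvp0 hS1.symm
  have hxle : v (algebraMap O K (z2 - 1)) ≤ 1 := hv.map_le_one _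
  have hBle : v (algebraMap O K ((p : O) * ((z2 - 1) * (1 + (z2 - 1) * g))))
      ≤ v (p : K) * v (algebraMap O K (z2 - 1)) := by
    simp only [map_mul, map_natCast, Valuation.map_mul]
    calc v (p : K) * (v (algebraMap O K (z2 - 1)) * v (algebraMap O K (1 + (z2 - 1) * g)))
        ≤ v (p : K) * (v (algebraMap O K (z2 - 1)) * 1) :=
          mul_le_mul_right (mul_le_mul_right (hv.map_le_one _) _) _
      _ = v (p : K) * v (algebraMap O K (z2 - 1)) := by rw [mul_one]
  -- key : v p < v(z2-1)^(p-1)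
  have hkey : v (p : K) < v (algebraMap O K (z2 - 1)) ^ (p - 1) := by
    by_contra hcon
    push_neg at hcon
    have hw1 : v (algebraMap O K (z1 - 1)) ≤ v (p : K) * v (algebraMap O K (z2 - 1)) := by
      have := congr_arg (fun t : O => v (algebraMap O K t)) e
      rw [map_add] at this
      have hmax := v.map_add (algebraMap O K ((z2 - 1) ^ p))
        (algebraMap O K ((p : O) * ((z2 - 1) * (1 + (z2 - 1) * g))))
      rw [this] at hmax
      refine hmax.trans (max_le ?_ hBle)
      rw [map_pow, v.map_pow]
      have hps : p - 1 + 1 = p := Nat.succ_pred_eq_of_pos hp.pos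
      calc v (algebraMap O K (z2 - 1)) ^ p
          = v (algebraMap O K (z2 - 1)) ^ (p - 1) * v (algebraMap O K (z2 - 1)) := by
            rw [← pow_succ, hps]
        _ ≤ v (p : K) * v (algebraMap O K (z2 - 1)) := mul_le_mul_left hcon _
    have hple : v (p : K) ≤ v (algebraMap O K (z1 - 1)) := by
      rw [← hS1]
      exact pow_le_of_le_one zero_le (hv.map_le_one _) (by have := hp.two_le; omega)
    have h1le : (1 : ℝ≥0) ≤ v (algebraMap O K (z2 - 1)) := by
      have := hple.trans hw1
      rcases le_or_gt 1 (v (algebraMap O K (z2 - 1))) with h | h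
      · exact h
      · exfalso
        have : v (p : K) * v (algebraMap O K (z2 - 1)) < v (p : K) * 1 := by
          exact mul_lt_mul_of_pos_left h (pos_iff_ne_zero.2 hvp0)
        rw [mul_one] at this
        exact absurd (hple.trans hw1) (not_le.2 this)
    have : v (algebraMap O K (z2 - 1)) = 1 := le_antisymm hxle h1le
    rw [this, one_pow] at hcon
    exact absurd (hcon.trans_lt hvp1) (lt_irrefl _)
  -- dominance: v(z1 - 1) = v(z2-1)^p
  have hdom : v (algebraMap O K (z1 - 1)) = v (algebraMap O K (z2 - 1)) ^ p := by
    have hlt : v (algebraMap O K ((p : O) * ((z2 - 1) * (1 + (z2 - 1) * g))))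
        < v (algebraMap O K ((z2 - 1) ^ p)) := by
      rw [map_pow, v.map_pow]
      refine hBle.trans_lt ?_
      have hps : p - 1 + 1 = p := Nat.succ_pred_eq_of_pos hp.pos
      calc v (p : K) * v (algebraMap O K (z2 - 1))
          < v (algebraMap O K (z2 - 1)) ^ (p - 1) * v (algebraMap O K (z2 - 1)) := by
            exact mul_lt_mul_of_pos_right hkey (pos_iff_ne_zero.2 hv02)
        _ = v (algebraMap O K (z2 - 1)) ^ p := by rw [← pow_succ, hps]
    have := congr_arg (fun t : O => v (algebraMap O K t)) e
    rw [map_add, Valuation.map_add_eq_of_lt_left _ hlt] at this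
    rw [← this, map_pow, v.map_pow]
  rw [pow_mul, ← hdom, hS1]

end Roots

end FontaineThetaAux
namespace FontaineThetaAux

section PreTiltAux

open Perfection

variable {p : ℕ} [hp : Fact p.Prime]
variable {K : Type*} [Field K] {v : Valuation K ℝ≥0}
variable {O : Type*} [CommRing O] [Algebra O K] {hv : v.Integers O}
variable [hvp : Fact (v p ≠ 1)]
variable [Fact (¬ IsUnit (p : O))]

lemma valAux_eq' {f : PreTiltOld K v O hv p} {n : ℕ}
    (hfn : Perfection.coeff (ModPOld K v O hv p) p n f ≠ 0) :
    PreTilt.valAux K v O p f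
      = ModP.preVal K v O p (Perfection.coeff (ModPOld K v O hv p) p n f) ^ p ^ n :=
  PreTilt.valAux_eq hv hfn

lemma coeff_pow_pn (f : PreTiltOld K v O hv p) (n : ℕ) :
    Perfection.coeff (ModPOld K v O hv p) p n f ^ p ^ n
      = Perfection.coeff (ModPOld K v O hv p) p 0 f := by
  induction n with
  | zero => rw [pow_zero, pow_one]
  | succ n ih =>
      erw [pow_succ', pow_mul, Perfection.coeff_pow_p', ih]

lemma valAux_ne_zero {f : PreTiltOld K v O hv p} (hf : f ≠ 0) :
    PreTilt.valAux K v O p f ≠ 0 := by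
  obtain ⟨n, hn⟩ : ∃ n, Perfection.coeff (ModPOld K v O hv p) p n f ≠ 0 :=
    not_forall.1 fun h => hf <| Perfection.ext h
  rw [FontaineThetaAux.valAux_eq' hn]
  exact pow_ne_zero _ (fun h => hn ((ModP.preVal_eq_zero hv).1 h))

lemma padic_eq_zero [IsAdicComplete (Ideal.span {(p : O)}) O] {a : O}
    (h : ∀ n, (p : O) ^ n ∣ a) : a = 0 := by
  refine IsHausdorff.haus (I := Ideal.span {(p : O)}) inferInstance a fun n => ?_
  rw [SModEq.zero, ← Ideal.one_eq_top, Ideal.smul_eq_mul, mul_one,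
    Ideal.span_singleton_pow, Ideal.mem_span_singleton]
  exact h n

/-- The "sharp" construction: a compatible system of `p`-power roots in `O`
lifting the components of an element of the pre-tilt. -/
lemma exists_sharp [IsAdicComplete (Ideal.span {(p : O)}) O] (u : PreTiltOld K v O hv p) :
    ∃ s : ℕ → O,
      (∀ n, (Ideal.Quotient.mk (Ideal.span {(p : O)}) (s n) : ModPOld K v O hv p)
        = Perfection.coeff (ModPOld K v O hv p) p n u) ∧
      (∀ n, s (n + 1) ^ p = s n) ∧
      v (algebraMap O K (s 0)) = PreTilt.valAux K v O p u := by
  by_cases hu : u = 0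
  · refine ⟨fun _ => 0, fun n => ?_, fun n => ?_, ?_⟩
    · erw [hu, map_zero]
    · rw [zero_pow hp.out.ne_zero]
    · erw [hu, PreTilt.valAux_zero, map_zero, v.map_zero]
  choose a ha using fun n =>
    Ideal.Quotient.mk_surjective (I := Ideal.span {(p : O)})
      (Perfection.coeff (ModPOld K v O hv p) p n u)
  have hstep : ∀ m, (p : O) ∣ a (m + 1) ^ p - a m := by
    intro m
    rw [← Ideal.mem_span_singleton, ← Ideal.Quotient.eq]
    rw [map_pow, ha (m + 1), ha m]
    exact Perfection.coeff_pow_p' u m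
  have hkey : ∀ n m, (p : O) ^ (m + 1) ∣ a (n + (m + 1)) ^ p ^ (m + 1) - a (n + m) ^ p ^ m := by
    intro n m
    have h1 := dvd_sub_pow_of_dvd_sub (p := p) (hstep (n + m)) m
    have hrw : (a (n + m + 1) ^ p) ^ p ^ m = a (n + (m + 1)) ^ p ^ (m + 1) := by
      rw [← pow_mul, show n + m + 1 = n + (m + 1) by omega, pow_succ']
    rwa [hrw] at h1
  have hcauchy : ∀ n m m', m ≤ m' →
      (p : O) ^ m ∣ a (n + m') ^ p ^ m' - a (n + m) ^ p ^ m := by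
    intro n m m' hmm'
    induction m' with
    | zero =>
        have : m = 0 := by omega
        subst this; simp
    | succ k ih =>
        rcases Nat.lt_or_ge m (k + 1) with hlt | hge
        · have hmk : m ≤ k := by omega
          have h2 := ih hmk
          have h3 := (pow_dvd_pow (p : O) (show m ≤ k + 1 by omega)).trans (hkey n k)
          have h4 := dvd_add h3 h2
          rwa [sub_add_sub_cancel] at h4
        · have : m = k + 1 := by omega
          subst this; simp
  have hex : ∀ n, ∃ L, ∀ m, (p : O) ^ m ∣ L - a (n + m) ^ p ^ m := by
    intro n
    have hcond : ∀ {m m' : ℕ}, m ≤ m' →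
        (fun m => a (n + m) ^ p ^ m) m ≡ (fun m => a (n + m) ^ p ^ m) m'
          [SMOD ((Ideal.span {(p : O)}) ^ m • ⊤ : Submodule O O)] := by
      intro m m' hmm'
      rw [SModEq.sub_mem, ← Ideal.one_eq_top, Ideal.smul_eq_mul, mul_one,
        Ideal.span_singleton_pow, Ideal.mem_span_singleton]
      exact dvd_sub_comm.1 (hcauchy n m m' hmm')
    obtain ⟨L, hL⟩ := IsPrecomplete.prec (IsAdicComplete.toIsPrecomplete
      (I := Ideal.span {(p : O)})) hcond
    refine ⟨L, fun m => ?_⟩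
    have h5 := hL m
    rw [SModEq.sub_mem, ← Ideal.one_eq_top, Ideal.smul_eq_mul, mul_one,
      Ideal.span_singleton_pow, Ideal.mem_span_singleton] at h5
    exact dvd_sub_comm.1 h5
  choose s hs using hex
  have hmk : ∀ n, (Ideal.Quotient.mk (Ideal.span {(p : O)}) (s n) : ModPOld K v O hv p)
      = Perfection.coeff (ModPOld K v O hv p) p n u := by
    intro n
    have h1 := hs n 1
    rw [pow_one] at h1
    have : (Ideal.Quotient.mk (Ideal.span {(p : O)}) (s n) : ModPOld K v O hv p)
        = Ideal.Quotient.mk _ (a (n + 1) ^ p ^ 1) :=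
      Ideal.Quotient.eq.2 (Ideal.mem_span_singleton.2 h1)
    rw [this, pow_one, map_pow, ha (n + 1)]
    exact Perfection.coeff_pow_p' u n
  refine ⟨s, hmk, fun n => ?_, ?_⟩
  · -- s (n+1) ^ p = s n
    refine sub_eq_zero.1 (padic_eq_zero (p := p) fun m => ?_)
    have h1 : (p : O) ^ m ∣ s (n + 1) ^ p - a (n + (m + 1)) ^ p ^ (m + 1) := by
      have h2 := hs (n + 1) m
      have h3 := (sub_dvd_pow_sub_pow (s (n + 1)) (a (n + 1 + m) ^ p ^ m) p)
      have h4 := dvd_trans h2 h3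
      have hrw : (a (n + 1 + m) ^ p ^ m) ^ p = a (n + (m + 1)) ^ p ^ (m + 1) := by
        rw [← pow_mul, show n + 1 + m = n + (m + 1) by omega, ← pow_succ]
      rwa [hrw] at h4
    have h5 : (p : O) ^ m ∣ s n - a (n + (m + 1)) ^ p ^ (m + 1) :=
      (pow_dvd_pow (p : O) (Nat.le_succ m)).trans (hs n (m + 1))
    have h6 := dvd_sub h1 h5
    rwa [sub_sub_sub_cancel_right] at h6
  · -- v (s 0) = valAux u
    obtain ⟨n₀, hn₀⟩ : ∃ n, Perfection.coeff (ModPOld K v O hv p) p n u ≠ 0 :=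
      not_forall.1 fun h => hu <| Perfection.ext h
    have hvau : PreTilt.valAux K v O p u ≠ 0 := valAux_ne_zero hu
    have hvp1 : v (p : K) < 1 := by
      refine lt_of_le_of_ne ?_ hvp.out
      rw [← map_natCast (algebraMap O K) p]
      exact hv.map_le_one _
    obtain ⟨m₁, hm₁⟩ := NNReal.exists_pow_lt_of_lt_one (pos_iff_ne_zero.2 hvau) hvp1
    set m := max m₁ n₀ with hm
    have hcm : Perfection.coeff (ModPOld K v O hv p) p m u ≠ 0 :=
      Perfection.coeff_ne_zero_of_le hn₀ (le_max_right _ _)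
    have hca : (Ideal.Quotient.mk (Ideal.span {(p : O)}) (a m) : ModPOld K v O hv p) ≠ 0 := by
      rw [ha m]; exact hcm
    have hvam : v (algebraMap O K (a m ^ p ^ m)) = PreTilt.valAux K v O p u := by
      rw [FontaineThetaAux.valAux_eq' hcm, ← ha m, ModP.preVal_mk hv hca, map_pow, v.map_pow]
    have hdiff : v (algebraMap O K (s 0 - a m ^ p ^ m)) < PreTilt.valAux K v O p u := by
      have h1 : (p : O) ^ m ∣ s 0 - a m ^ p ^ m := by
        have := hs 0 m
        rwa [Nat.zero_add] at this
      calc v (algebraMap O K (s 0 - a m ^ p ^ m))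
          ≤ v (algebraMap O K ((p : O) ^ m)) := hv.le_of_dvd h1
        _ = v (p : K) ^ m := by rw [map_pow, v.map_pow, map_natCast]
        _ ≤ v (p : K) ^ m₁ :=
            pow_le_pow_of_le_one zero_le hvp1.le (le_max_left _ _)
        _ < PreTilt.valAux K v O p u := hm₁
    have hsplit : s 0 = a m ^ p ^ m + (s 0 - a m ^ p ^ m) := by ring
    rw [hsplit, map_add, Valuation.map_add_eq_of_lt_left, hvam]
    rw [hvam]
    exact hdiff

/-- Divisibility in the pre-tilt is governed by the valuation. -/
lemma dvd_of_valAux_le [IsAdicComplete (Ideal.span {(p : O)}) O]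
    {x y : PreTiltOld K v O hv p}
    (h : PreTilt.valAux K v O p x ≤ PreTilt.valAux K v O p y) : y ∣ x := by
  haveI : IsDomain O := Function.Injective.isDomain (algebraMap O K) hv.hom_inj
  by_cases hy : y = 0
  · have hx : x = 0 := by
      by_contra hx
      erw [hy, PreTilt.valAux_zero, le_zero_iff] at h
      exact valAux_ne_zero hx h
    rw [hx]; exact dvd_zero y
  obtain ⟨s, hs1, hs2, hs3⟩ := exists_sharp x
  obtain ⟨t, ht1, ht2, ht3⟩ := exists_sharp y
  have hspow : ∀ n, s n ^ p ^ n = s 0 := by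
    intro n
    induction n with
    | zero => rw [pow_zero, pow_one]
    | succ n ih => rw [pow_succ', pow_mul, hs2, ih]
  have htpow : ∀ n, t n ^ p ^ n = t 0 := by
    intro n
    induction n with
    | zero => rw [pow_zero, pow_one]
    | succ n ih => rw [pow_succ', pow_mul, ht2, ih]
  have hvty : ∀ n, v (algebraMap O K (t n)) ^ p ^ n = PreTilt.valAux K v O p y := by
    intro n
    rw [← v.map_pow, ← map_pow, htpow, ht3]
  have hvsx : ∀ n, v (algebraMap O K (s n)) ^ p ^ n = PreTilt.valAux K v O p x := by
    intro n
    rw [← v.map_pow, ← map_pow, hspow, hs3]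
  have htn0 : ∀ n, t n ≠ 0 := by
    intro n h0
    apply valAux_ne_zero hy
    rw [← hvty n, h0, map_zero, v.map_zero, zero_pow (pow_ne_zero _ hp.out.ne_zero)]
  have hle : ∀ n, v (algebraMap O K (s n)) ≤ v (algebraMap O K (t n)) := by
    intro n
    refine le_of_pow_le_pow_left₀ (pow_ne_zero n hp.out.ne_zero) zero_le ?_
    rw [hvty n, hvsx n]
    exact h
  choose c hc using fun n => hv.dvd_of_le (hle n)
  have hcc : ∀ n, c (n + 1) ^ p = c n := by
    intro n
    have htnz : t n ≠ 0 := htn0 n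
    apply mul_left_cancel₀ htnz
    calc t n * c (n + 1) ^ p = (t (n + 1) * c (n + 1)) ^ p := by
          rw [mul_pow, ht2]
      _ = s (n + 1) ^ p := by rw [← hc (n + 1)]
      _ = s n := hs2 n
      _ = t n * c n := hc n
  have hfrob : ∀ n, ((fun n => (Ideal.Quotient.mk (Ideal.span {(p : O)}) (c n)
      : ModPOld K v O hv p)) : ℕ → ModPOld K v O hv p) (n + 1) ^ p
      = (fun n => (Ideal.Quotient.mk (Ideal.span {(p : O)}) (c n) : ModPOld K v O hv p)) n := by
    intro n
    show (Ideal.Quotient.mk (Ideal.span {(p : O)}) (c (n + 1)) : ModPOld K v O hv p) ^ p = _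
    rw [← map_pow, hcc n]
  refine ⟨⟨fun n => (Ideal.Quotient.mk (Ideal.span {(p : O)}) (c n) : ModPOld K v O hv p),
    hfrob⟩, ?_⟩
  refine Perfection.ext fun n => ?_
  erw [RingHom.map_mul]
  have hz : Perfection.coeff (ModPOld K v O hv p) p n
      (⟨fun n => (Ideal.Quotient.mk (Ideal.span {(p : O)}) (c n) : ModPOld K v O hv p), hfrob⟩ :
        Ring.Perfection (ModPOld K v O hv p) p)
      = Ideal.Quotient.mk (Ideal.span {(p : O)}) (c n) := rfl
  rw [hz, ← hs1, hc n, map_mul, ht1]; rfl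

lemma valAux_le_of_coeff_zero {u : PreTiltOld K v O hv p}
    (h : Perfection.coeff (ModPOld K v O hv p) p 0 u = 0) :
    PreTilt.valAux K v O p u ≤ v (p : K) := by
  by_cases hu : u = 0
  · erw [hu, PreTilt.valAux_zero]; exact zero_le
  obtain ⟨n, hn⟩ : ∃ n, Perfection.coeff (ModPOld K v O hv p) p n u ≠ 0 :=
    not_forall.1 fun hh => hu <| Perfection.ext hh
  obtain ⟨a, ha⟩ := Ideal.Quotient.mk_surjective (I := Ideal.span {(p : O)})
    (Perfection.coeff (ModPOld K v O hv p) p n u)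
  have hca : (Ideal.Quotient.mk (Ideal.span {(p : O)}) a : ModPOld K v O hv p) ≠ 0 := by
    rw [ha]; exact hn
  have hdvd : (p : O) ∣ a ^ p ^ n := by
    erw [← Ideal.mem_span_singleton, ← Ideal.Quotient.eq_zero_iff_mem, map_pow, ha,
      coeff_pow_pn, h]; rfl
  rw [FontaineThetaAux.valAux_eq' hn, ← ha, ModP.preVal_mk hv hca, ← v.map_pow, ← map_pow]
  calc v (algebraMap O K (a ^ p ^ n)) ≤ v (algebraMap O K (p : O)) := hv.le_of_dvd hdvd
    _ = v (p : K) := by rw [map_natCast]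

end PreTiltAux

end FontaineThetaAux
open scoped NNReal

set_option maxHeartbeats 1600000

/-- If `K` is algebraically closed and `(ζ_n)` is a compatible system of primitive `pⁿ`-th
roots of unity, with `ε, ε' ∈ E⁺` having components `ζ_n mod p` resp. `ζ_{n+1} mod p`
(so `(ε')^p = ε`), then the kernel of Fontaine's map `θ : W(E⁺) → O` is the principal
ideal generated by `([ε] - 1)/([ε'] - 1) = ∑_{i<p} [ε']^i`. -/
theorem fontaine_theta_ker_eq_span
    (p : ℕ) [Fact p.Prime]
    (K : Type*) [Field K] [IsAlgClosed K] (v : Valuation K ℝ≥0)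
    (O : Type*) [CommRing O] [Algebra O K] (hv : v.Integers O)
    [Fact (v p ≠ 1)]
    [IsAdicComplete (Ideal.span {(p : O)}) O]
    (θ : WittVector p (PreTiltOld K v O hv p) →+* O)
    (hθ : ∀ (x : PreTiltOld K v O hv p) (n : ℕ) (a : O),
      (Ideal.Quotient.mk (Ideal.span {(p : O)}) a : ModPOld K v O hv p) =
          Perfection.coeff (ModPOld K v O hv p) p n x →
        (p : O) ^ (n + 1) ∣ θ (WittVector.teichmuller p x) - a ^ p ^ n)
    (ζ : ℕ → O)
    (hζ0 : ζ 0 = 1) (hζ1 : ζ 1 ≠ 1) (hζp : ∀ n, ζ (n + 1) ^ p = ζ n)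
    (hζprim : ∀ n, IsPrimitiveRoot (ζ n) (p ^ n))
    (ε ε' : PreTiltOld K v O hv p)
    (hε : ∀ n, Perfection.coeff (ModPOld K v O hv p) p n ε =
      (Ideal.Quotient.mk (Ideal.span {(p : O)}) (ζ n) : ModPOld K v O hv p))
    (hε' : ∀ n, Perfection.coeff (ModPOld K v O hv p) p n ε' =
      (Ideal.Quotient.mk (Ideal.span {(p : O)}) (ζ (n + 1)) : ModPOld K v O hv p)) :
    RingHom.ker θ =
      Ideal.span {∑ i ∈ Finset.range p, WittVector.teichmuller p ε' ^ i} := by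
  classical
  have hp' : p.Prime := Fact.out
  haveI : IsDomain O := Function.Injective.isDomain (algebraMap O K) hv.hom_inj
  haveI hPR : PerfectRing (PreTiltOld K v O hv p) p :=
    inferInstanceAs (PerfectRing (Perfection (ModPOld K v O hv p) p) p)
  haveI : CharP (PreTiltOld K v O hv p) p :=
    inferInstanceAs (CharP (Perfection (ModPOld K v O hv p) p) p)
  haveI : Fact (¬ IsUnit (p : O)) :=
    ⟨mt hv.one_of_isUnit <| (map_natCast (algebraMap O K) p).symm ▸ (Fact.out : v (p : K) ≠ 1)⟩
  have hvp1 : v (p : K) < 1 := by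
    refine lt_of_le_of_ne ?_ (Fact.out : v (p : K) ≠ 1)
    rw [← map_natCast (algebraMap O K) p]
    exact hv.map_le_one _
  have hz1p : ζ 1 ^ p = 1 := by rw [hζp 0, hζ0]
  have hvp0 : v (p : K) ≠ 0 := by
    intro h0
    have hpK : (p : K) = 0 := v.zero_iff.1 h0
    have hchar : ringChar K = p := by
      have hdvd : ringChar K ∣ p := (CharP.cast_eq_zero_iff K (ringChar K) p).1 hpK
      rcases hp'.eq_one_or_self_of_dvd _ hdvd with h | h
      · exact absurd h (CharP.ringChar_ne_one)
      · exact h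
    haveI : CharP K p := hchar ▸ ringChar.charP K
    have hfr : frobenius K p (algebraMap O K (ζ 1)) = frobenius K p 1 := by
      rw [frobenius_def, frobenius_def, one_pow, ← map_pow, hz1p, map_one]
    have h2 : algebraMap O K (ζ 1) = 1 := frobenius_inj K p hfr
    exact hζ1 (hv.hom_inj (by rw [h2, map_one]))
  have hpO : (p : O) ≠ 0 := by
    intro h
    apply hvp0
    rw [← map_natCast (algebraMap O K) p, h, map_zero, v.map_zero]
  -- θ ([ε']) = ζ 1
  have hzpow : ∀ n, ζ (n + 1) ^ p ^ n = ζ 1 := by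
    intro n
    induction n with
    | zero => rw [pow_zero, pow_one]
    | succ n ih => rw [pow_succ', pow_mul, hζp (n + 1), ih]
  have hθε' : θ (WittVector.teichmuller p ε') = ζ 1 := by
    have hdvd : ∀ n, (p : O) ^ n ∣ θ (WittVector.teichmuller p ε') - ζ 1 := by
      intro n
      have h1 := hθ ε' n (ζ (n + 1)) (hε' n).symm
      rw [hzpow n] at h1
      exact (pow_dvd_pow _ (Nat.le_succ n)).trans h1
    exact sub_eq_zero.1 (FontaineThetaAux.padic_eq_zero (p := p) hdvd)
  set Ξ : WittVector p (PreTiltOld K v O hv p) :=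
    ∑ i ∈ Finset.range p, WittVector.teichmuller p ε' ^ i with hΞ
  have hθΞ : θ Ξ = 0 := by
    rw [hΞ, map_sum]
    have h1 : ∀ i ∈ Finset.range p,
        θ (WittVector.teichmuller p ε' ^ i) = ζ 1 ^ i := fun i _ => by
      rw [map_pow, hθε']
    rw [Finset.sum_congr rfl h1]
    have h2 := geom_sum_mul (ζ 1) p
    rw [hz1p, sub_self] at h2
    exact (mul_eq_zero.1 h2).resolve_right (sub_ne_zero.2 hζ1)
  -- the reduction of Ξ
  have hct : ∀ c : PreTiltOld K v O hv p,
      WittVector.constantCoeff (WittVector.teichmuller p c) = c := fun c => by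
    rw [WittVector.constantCoeff_apply, WittVector.teichmuller_coeff_zero]
  have hξ0 : WittVector.constantCoeff Ξ = ∑ i ∈ Finset.range p, ε' ^ i := by
    rw [hΞ, map_sum]
    exact Finset.sum_congr rfl fun i _ => by rw [map_pow, hct]
  -- coefficients of Σ ε'^i
  have hcoeffξ0 : ∀ n, Perfection.coeff (ModPOld K v O hv p) p n (∑ i ∈ Finset.range p, ε' ^ i)
      = (Ideal.Quotient.mk (Ideal.span {(p : O)})
          (∑ i ∈ Finset.range p, ζ (n + 1) ^ i) : ModPOld K v O hv p) := by
    intro n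
    erw [map_sum, map_sum]
    exact Finset.sum_congr rfl fun i _ => by erw [map_pow, map_pow, hε' n]; rfl
  -- value of the reduction
  have hvalξ0 : PreTilt.valAux K v O p (∑ i ∈ Finset.range p, ε' ^ i) = v (p : K) := by
    have hS1 := FontaineThetaAux.root_one_val hp' hv hvp1 hz1p hζ1
    have hS2 := FontaineThetaAux.root_two_val hp' hv hvp1 hvp0 hz1p hζ1 (hζp 1)
    have hgeom : (∑ i ∈ Finset.range p, ζ 2 ^ i) * (ζ 2 - 1) = ζ 1 - 1 := by
      have := geom_sum_mul (ζ 2) p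
      rwa [hζp 1] at this
    have hmulv : v (algebraMap O K (∑ i ∈ Finset.range p, ζ 2 ^ i))
        * v (algebraMap O K (ζ 2 - 1)) = v (algebraMap O K (ζ 1 - 1)) := by
      rw [← v.map_mul, ← map_mul, hgeom]
    have hp1 : p - 1 ≠ 0 := by have := hp'.two_le; omega
    have hbig : v (algebraMap O K (∑ i ∈ Finset.range p, ζ 2 ^ i)) ^ (p * (p - 1))
        * v (p : K) = v (p : K) ^ (p - 1) * v (p : K) := by
      have h3 := congrArg (· ^ (p * (p - 1))) hmulv
      simp only [mul_pow] at h3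
      rw [hS2] at h3
      calc v (algebraMap O K (∑ i ∈ Finset.range p, ζ 2 ^ i)) ^ (p * (p - 1)) * v (p : K)
          = v (algebraMap O K (ζ 1 - 1)) ^ (p * (p - 1)) := h3
        _ = (v (algebraMap O K (ζ 1 - 1)) ^ (p - 1)) ^ p := by
            rw [← pow_mul, mul_comm]
        _ = v (p : K) ^ p := by rw [hS1]
        _ = v (p : K) ^ (p - 1) * v (p : K) := by
            rw [← pow_succ, Nat.sub_add_cancel hp'.one_lt.le]
    have hbp : v (algebraMap O K (∑ i ∈ Finset.range p, ζ 2 ^ i)) ^ p = v (p : K) := by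
      refine FontaineThetaAux.pow_inj_nnreal hp1 ?_
      rw [← pow_mul]
      exact mul_right_cancel₀ hvp0 hbig
    have hblt : v (p : K) < v (algebraMap O K (∑ i ∈ Finset.range p, ζ 2 ^ i)) := by
      by_contra hcon
      push_neg at hcon
      have h4 : v (algebraMap O K (∑ i ∈ Finset.range p, ζ 2 ^ i)) ^ p ≤ v (p : K) ^ p :=
        pow_le_pow_left' hcon p
      rw [hbp] at h4
      have h5 : v (p : K) ^ p < v (p : K) := by
        calc v (p : K) ^ p = v (p : K) ^ (p - 1) * v (p : K) := by
              rw [← pow_succ, Nat.sub_add_cancel hp'.one_lt.le]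
          _ < 1 * v (p : K) := by
              exact mul_lt_mul_of_pos_right
                (pow_lt_one₀ zero_le hvp1 hp1) (pos_iff_ne_zero.2 hvp0)
          _ = v (p : K) := one_mul _
      exact absurd (h4.trans_lt h5) (lt_irrefl _)
    have hbne : (Ideal.Quotient.mk (Ideal.span {(p : O)})
        (∑ i ∈ Finset.range p, ζ 2 ^ i) : ModPOld K v O hv p) ≠ 0 :=
      (ModP.v_p_lt_val hv).1 hblt
    have hcne : Perfection.coeff (ModPOld K v O hv p) p 1 (∑ i ∈ Finset.range p, ε' ^ i) ≠ 0 := by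
      rw [hcoeffξ0 1]; exact hbne
    erw [FontaineThetaAux.valAux_eq' hcne, hcoeffξ0 1, ModP.preVal_mk hv hbne, pow_one, hbp]
  -- key step
  have hstep : ∀ w : WittVector p (PreTiltOld K v O hv p), θ w = 0 →
      ∃ c w', w = Ξ * WittVector.teichmuller p c + (p : WittVector p (PreTiltOld K v O hv p)) * w' ∧ θ w' = 0 := by
    intro w hw
    obtain ⟨w₁, hw₁⟩ := FontaineThetaAux.exists_teichmuller_add_p_mul w
    obtain ⟨A, hA⟩ := Ideal.Quotient.mk_surjective (I := Ideal.span {(p : O)})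
      (Perfection.coeff (ModPOld K v O hv p) p 0 (w.coeff 0))
    have hdvdA := hθ (w.coeff 0) 0 A hA
    rw [pow_zero, pow_one, pow_one] at hdvdA
    have hθw : θ (WittVector.teichmuller p (w.coeff 0)) + (p : O) * θ w₁ = 0 := by
      have h6 := congrArg θ hw₁
      rw [hw, map_add, map_mul, map_natCast] at h6
      linear_combination -h6
    have hpθu : (p : O) ∣ θ (WittVector.teichmuller p (w.coeff 0)) :=
      ⟨-θ w₁, by linear_combination hθw⟩
    have hpA : (p : O) ∣ A := by
      have h7 := dvd_sub hpθu hdvdA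
      simpa using h7
    have hu0 : Perfection.coeff (ModPOld K v O hv p) p 0 (w.coeff 0) = 0 := by
      erw [← hA, Ideal.Quotient.eq_zero_iff_mem, Ideal.mem_span_singleton]
      exact hpA
    have hdvdu : (∑ i ∈ Finset.range p, ε' ^ i) ∣ w.coeff 0 := by
      refine FontaineThetaAux.dvd_of_valAux_le ?_
      erw [hvalξ0]
      exact FontaineThetaAux.valAux_le_of_coeff_zero hu0
    obtain ⟨cq, hcq⟩ := hdvdu
    have hc0 : ∀ i < 1, (w - Ξ * WittVector.teichmuller p cq).coeff i = 0 := by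
      intro i hi
      interval_cases i
      have h8 : (w - Ξ * WittVector.teichmuller p cq).coeff 0
          = WittVector.constantCoeff w - WittVector.constantCoeff Ξ *
            WittVector.constantCoeff (WittVector.teichmuller p cq) := by
        rw [← map_mul, ← map_sub, WittVector.constantCoeff_apply]
      rw [h8, hξ0, hct, WittVector.constantCoeff_apply, hcq, sub_self]
    obtain ⟨w', hw'⟩ := FontaineThetaAux.exists_p_pow_mul
      (w - Ξ * WittVector.teichmuller p cq) 1 hc0
    rw [pow_one] at hw'
    refine ⟨cq, w', by linear_combination hw', ?_⟩
    have h9 : (p : O) * θ w' = 0 := by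
      have h10 := congrArg θ hw'
      rw [map_sub, map_mul, map_mul, map_natCast, hw, hθΞ] at h10
      linear_combination -h10
    exact (mul_eq_zero.1 h9).resolve_left hpO
  -- now prove the two inclusions
  refine le_antisymm ?_ ?_
  · -- ker ⊆ span
    intro x hx
    have hx0 : θ x = 0 := hx
    choose cf wf hdec hker using hstep
    let X : ℕ → {w : WittVector p (PreTiltOld K v O hv p) // θ w = 0} := fun k =>
      Nat.rec ⟨x, hx0⟩ (fun _ prev => ⟨wf prev.1 prev.2, hker prev.1 prev.2⟩) k
    let C : ℕ → PreTiltOld K v O hv p := fun k => cf (X k).1 (X k).2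
    have hXdec : ∀ k, (X k).1
        = Ξ * WittVector.teichmuller p (C k) + (p : WittVector p (PreTiltOld K v O hv p)) * (X (k + 1)).1 := fun k =>
      hdec (X k).1 (X k).2
    let Y : ℕ → WittVector p (PreTiltOld K v O hv p) := fun k =>
      ∑ j ∈ Finset.range k, (p : WittVector p (PreTiltOld K v O hv p)) ^ j *
        WittVector.teichmuller p (C j)
    have hY : ∀ k, Y (k + 1) = Y k + (p : WittVector p (PreTiltOld K v O hv p)) ^ k *
        WittVector.teichmuller p (C k) := fun k => Finset.sum_range_succ _ _
    have hpart : ∀ k, x = Ξ * Y k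
        + (p : WittVector p (PreTiltOld K v O hv p)) ^ k * (X k).1 := by
      intro k
      induction k with
      | zero =>
          show x = Ξ * (∑ j ∈ Finset.range 0, _) + _ * (X 0).1
          rw [Finset.sum_range_zero, mul_zero, zero_add, pow_zero, one_mul]
          rfl
      | succ k ih =>
          rw [hY k]
          calc x = Ξ * Y k + (p : WittVector p (PreTiltOld K v O hv p)) ^ k * (X k).1 := ih
            _ = Ξ * Y k + (p : WittVector p (PreTiltOld K v O hv p)) ^ k *
                (Ξ * WittVector.teichmuller p (C k) + (p : WittVector p (PreTiltOld K v O hv p)) * (X (k + 1)).1) := by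
                rw [← hXdec k]
            _ = Ξ * (Y k + (p : WittVector p (PreTiltOld K v O hv p)) ^ k *
                WittVector.teichmuller p (C k))
                + (p : WittVector p (PreTiltOld K v O hv p)) ^ (k + 1) * (X (k + 1)).1 := by
                ring
    obtain ⟨L, hLcoeff⟩ : ∃ L : WittVector p (PreTiltOld K v O hv p),
        ∀ i, L.coeff i = (Y (i + 1)).coeff i :=
      ⟨WittVector.mk p fun n => (Y (n + 1)).coeff n, fun i => rfl⟩
    have hYtrunc : ∀ i k, i < k → (Y k).coeff i = L.coeff i := by
      intro i k hik
      have hdvd : (p : WittVector p (PreTiltOld K v O hv p)) ^ (i + 1) ∣ Y k - Y (i + 1) := by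
        have hsub : Y k - Y (i + 1) = ∑ j ∈ Finset.Ico (i + 1) k,
            (p : WittVector p (PreTiltOld K v O hv p)) ^ j * WittVector.teichmuller p (C j) := by
          rw [Finset.sum_Ico_eq_sub _ hik]
        rw [hsub]
        exact Finset.dvd_sum fun j hj =>
          ((pow_dvd_pow _ (Finset.mem_Ico.1 hj).1).mul_right _)
      rw [hLcoeff i]
      exact FontaineThetaAux.coeff_eq_of_dvd (Nat.lt_succ_self i) hdvd
    have hfinal : x - Ξ * L = 0 := by
      apply FontaineThetaAux.eq_zero_of_forall_truncate
      intro k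
      have h1 : WittVector.truncate k L = WittVector.truncate k (Y k) := by
        ext i
        rw [WittVector.coeff_truncate, WittVector.coeff_truncate, hYtrunc i k i.2]
      have h2 : WittVector.truncate k (x - Ξ * L)
          = WittVector.truncate k ((p : WittVector p (PreTiltOld K v O hv p)) ^ k * (X k).1) := by
        rw [map_sub, map_mul, h1, ← map_mul, ← map_sub]
        congr 1
        rw [hpart k]
        ring
      rw [h2]
      have h3 := FontaineThetaAux.truncate_eq_of_dvd
        (x := (p : WittVector p (PreTiltOld K v O hv p)) ^ k * (X k).1) (y := 0) (k := k)
        ⟨(X k).1, by ring⟩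
      rw [map_zero] at h3
      exact h3
    have hxL : x = Ξ * L := by linear_combination hfinal
    rw [hxL]
    exact Ideal.mem_span_singleton.2 ⟨L, rfl⟩
  · -- span ⊆ ker
    rw [Ideal.span_le, Set.singleton_subset_iff]
    exact hθΞ
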